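/- Let j, k, n be natural numbers with j ≤ k and k + 1 ≤ n. Then ∑_{i=j+1}^{k+1} C(n-i, k+1-i) · C(i-1, j) · H_{i-1} = C(n, k-j) · (H_n - H_{n-(k-j)} + H_j), as an identity of rational numbers. -/

import Mathlib

open Finset

private lemma lemA (j : ℕ) : ∀ m : ℕ,
    ∑ t ∈ range (m+1), (((j+t).choose j : ℚ)) * harmonic (j+t)
      = ((j+m+1).choose m : ℚ) * (harmonic (j+m+1) - 1/(j+1)) := by
  intro m
  induction m with
  | zero =>
      rw [Finset.sum_range_one]
      simp only [add_zero, Nat.choose_self, Nat.choose_zero_right, Nat.cast_one, one_mul]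
      rw [show j + 0 + 1 = j + 1 by omega, harmonic_succ]
      push_cast
      ring
  | succ m ih =>
      rw [Finset.sum_range_succ, ih]
      have c2 : (j+m+1).choose j = (j+m+1).choose (m+1) := by
        rw [← Nat.choose_symm (show m+1 ≤ j+m+1 by omega)]
        congr 1; omega
      have c3 : (j+m+2) * ((j+m+1).choose (m+1)) = ((j+m+2).choose (m+1)) * (j+1) := by
        have h1 := Nat.add_one_mul_choose_eq (j+m+1) j
        have h2 : (j+m+1+1).choose (j+1) = (j+m+1+1).choose (m+1) := by
          rw [← Nat.choose_symm (show m+1 ≤ j+m+1+1 by omega)]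
          congr 1; omega
        rw [h2, c2] at h1
        exact h1
      set A : ℚ := ((j+m+1).choose m : ℚ) with hA
      set B : ℚ := ((j+m+1).choose (m+1) : ℚ) with hB
      have pasQ : ((j+(m+1)+1).choose (m+1) : ℚ) = A + B := by
        rw [show j+(m+1)+1 = (j+m+1)+1 by omega]
        rw [Nat.choose_succ_succ]
        push_cast [hA, hB]; ring
      have c2Q : ((j+(m+1)).choose j : ℚ) = B := by
        rw [show j+(m+1) = j+m+1 by omega, c2]
      rw [pasQ, c2Q]
      have hH : harmonic (j+(m+1)+1) = harmonic (j+(m+1)) + ((j:ℚ)+m+2)⁻¹ := by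
        rw [harmonic_succ]
        push_cast
        ring_nf
      rw [hH, show j+(m+1) = j+m+1 by omega]
      have h1 : ((j:ℚ)+1) ≠ 0 := by positivity
      have h2 : ((j:ℚ)+m+2) ≠ 0 := by positivity
      have c3Q : ((j:ℚ)+m+2) * B = (A + B) * ((j:ℚ)+1) := by
        have : ((j+m+2 : ℕ) : ℚ) * B = ((A:ℚ)+B) * ((j+1 : ℕ) : ℚ) := by
          rw [show ((j+m+2 : ℕ):ℚ) * B = (((j+m+2) * ((j+m+1).choose (m+1)) : ℕ) : ℚ) by
                push_cast [hB]; ring,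
              c3]
          rw [show j+m+2 = (j+m+1)+1 by omega, Nat.choose_succ_succ]
          push_cast [hA, hB]; ring
        push_cast at this
        linarith [this]
      have hq : B / ((j:ℚ)+1) = (A + B) / ((j:ℚ)+m+2) := by
        rw [div_eq_div_iff h1 h2]
        linear_combination c3Q
      linear_combination hq

private lemma Sform (j : ℕ) : ∀ d m : ℕ,
    ∑ t ∈ range (m+1),
        ((m - t + d).choose (m - t) : ℚ) * ((j+t).choose j : ℚ) * harmonic (j+t)
      = ((j+m+1+d).choose m : ℚ)
          * (harmonic (j+m+1+d) - harmonic (j+1+d) + harmonic j) := by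
  intro d
  induction d with
  | zero =>
      intro m
      have h1 : ∀ t ∈ range (m+1),
          ((m - t + 0).choose (m - t) : ℚ) * ((j+t).choose j : ℚ) * harmonic (j+t)
            = ((j+t).choose j : ℚ) * harmonic (j+t) := by
        intro t ht
        simp [Nat.choose_self]
      rw [Finset.sum_congr rfl h1, lemA j m]
      rw [show j+1+0 = j+1 by omega, show j+m+1+0 = j+m+1 by omega, harmonic_succ j]
      push_cast
      ring
  | succ d ihd =>
      intro m
      induction m with
      | zero =>
          rw [Finset.sum_range_one, show j+0+1+(d+1) = j+1+(d+1) by omega]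
          simp only [Nat.sub_zero, Nat.sub_self, Nat.choose_zero_right, add_zero,
            Nat.choose_self, Nat.cast_one, one_mul]
          ring
      | succ m ihm =>
          have hmain : ∑ t ∈ range (m+1),
                ((m+1 - t + (d+1)).choose (m+1 - t) : ℚ) * ((j+t).choose j : ℚ)
                  * harmonic (j+t)
              = (∑ t ∈ range (m+1),
                  ((m+1 - t + d).choose (m+1 - t) : ℚ) * ((j+t).choose j : ℚ)
                    * harmonic (j+t))
                + ∑ t ∈ range (m+1),
                    ((m - t + (d+1)).choose (m - t) : ℚ) * ((j+t).choose j : ℚ)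
                      * harmonic (j+t) := by
            rw [← Finset.sum_add_distrib]
            apply Finset.sum_congr rfl
            intro t ht
            have htm : t ≤ m := Nat.lt_succ_iff.mp (Finset.mem_range.mp ht)
            have e3 : ((m+1 - t + (d+1)).choose (m+1 - t) : ℕ)
                = (m+1 - t + d).choose (m+1 - t) + (m - t + (d+1)).choose (m - t) := by
              rw [show m+1 - t = m - t + 1 by omega,
                  show m - t + 1 + d = m - t + (d+1) by omega,
                  show m - t + 1 + (d+1) = (m - t + (d+1)) + 1 by omega,
                  Nat.choose_succ_succ]
              simp only [Nat.succ_eq_add_one]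
              omega
            rw [e3]
            push_cast
            ring
          have hsplit :
              ∑ t ∈ range (m+2),
                  ((m+1 - t + (d+1)).choose (m+1 - t) : ℚ) * ((j+t).choose j : ℚ)
                    * harmonic (j+t)
                = (∑ t ∈ range (m+2),
                    ((m+1 - t + d).choose (m+1 - t) : ℚ) * ((j+t).choose j : ℚ)
                      * harmonic (j+t))
                  + ∑ t ∈ range (m+1),
                      ((m - t + (d+1)).choose (m - t) : ℚ) * ((j+t).choose j : ℚ)
                        * harmonic (j+t) := by
            rw [Finset.sum_range_succ, Finset.sum_range_succ
              (fun t => ((m+1 - t + d).choose (m+1 - t) : ℚ) * ((j+t).choose j : ℚ)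
                * harmonic (j+t))]
            rw [show m + 1 - (m+1) = 0 by omega]
            simp only [Nat.choose_zero_right, Nat.cast_one, zero_add, one_mul]
            rw [hmain]
            ring
          rw [hsplit, ihd (m+1), ihm]
          rw [show j + (m+1) + 1 + d = j+m+d+2 by omega,
              show j + m + 1 + (d+1) = j+m+d+2 by omega,
              show j + (m+1) + 1 + (d+1) = (j+m+d+2)+1 by omega,
              show j + 1 + (d + 1) = (j+1+d)+1 by omega]
          have pasQ : (((j+m+d+2)+1).choose (m+1) : ℚ)
              = ((j+m+d+2).choose m : ℚ) + ((j+m+d+2).choose (m+1) : ℚ) := by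
            rw [Nat.choose_succ_succ]; push_cast; ring
          have hH1 : harmonic ((j+m+d+2)+1)
              = harmonic (j+m+d+2) + ((j:ℚ)+m+d+3)⁻¹ := by
            rw [harmonic_succ]; push_cast; ring_nf
          have hH2 : harmonic ((j+1+d)+1) = harmonic (j+1+d) + ((j:ℚ)+d+2)⁻¹ := by
            rw [harmonic_succ]; push_cast; ring_nf
          rw [pasQ, hH1, hH2]
          set X : ℚ := ((j+m+d+2).choose (m+1) : ℚ) with hX
          set Y : ℚ := ((j+m+d+2).choose m : ℚ) with hY
          have key : ((j+m+d+2).choose (m+1)) * (j+m+d+3)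
              = (((j+m+d+2)+1).choose (m+1)) * (j+d+2) := by
            have := Nat.choose_mul_succ_eq (j+m+d+2) (m+1)
            rw [show j+m+d+2+1 - (m+1) = j+d+2 by omega] at this
            rw [show j+m+d+2+1 = j+m+d+3 by omega] at this
            rw [show (j+m+d+2)+1 = j+m+d+3 by omega]
            exact this
          have keyQ : X * ((j:ℚ)+m+d+3) = (Y + X) * ((j:ℚ)+d+2) := by
            have hc : ((((j+m+d+2)+1).choose (m+1) : ℕ) : ℚ) = Y + X := by
              rw [Nat.choose_succ_succ]; push_cast [hX, hY]; ring
            have h0 : ((((j+m+d+2).choose (m+1)) * (j+m+d+3) : ℕ) : ℚ)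
                = (((((j+m+d+2)+1).choose (m+1)) * (j+d+2) : ℕ) : ℚ) := by
              exact_mod_cast congrArg (Nat.cast (R := ℚ)) key
            push_cast at h0
            rw [show ((((j+m+d+2)+1).choose (m+1) : ℕ) : ℚ) = Y + X from hc] at h0
            push_cast [hX] at h0 ⊢
            linarith [h0]
          have h1 : ((j:ℚ)+m+d+3) ≠ 0 := by positivity
          have h2 : ((j:ℚ)+d+2) ≠ 0 := by positivity
          have hq : X / ((j:ℚ)+d+2) = (Y + X) / ((j:ℚ)+m+d+3) := by
            rw [div_eq_div_iff h2 h1]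
            linear_combination keyQ
          linear_combination hq

theorem d_j_closed_form
    (j k n : ℕ) (hjk : j ≤ k) (hkn : k + 1 ≤ n) :
    ∑ i ∈ Finset.Icc (j + 1) (k + 1),
        (Nat.choose (n - i) (k + 1 - i) : ℚ) * (Nat.choose (i - 1) j : ℚ) *
          harmonic (i - 1) =
      (Nat.choose n (k - j) : ℚ) *
        (harmonic n - harmonic (n - (k - j)) + harmonic j) := by
  obtain ⟨m, rfl⟩ : ∃ m, k = j + m := ⟨k - j, by omega⟩
  obtain ⟨d, rfl⟩ : ∃ d, n = j + m + 1 + d := ⟨n - (j + m + 1), by omega⟩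
  have hIcc : Finset.Icc (j+1) (j+m+1) = Finset.Ico (j+1) (j+m+2) := by
    rw [show j+m+2 = j+m+1+1 by rfl, Finset.Ico_add_one_right_eq_Icc]
  have hL : ∑ i ∈ Finset.Icc (j + 1) (j + m + 1),
        ((j+m+1+d - i).choose (j + m + 1 - i) : ℚ) * ((i - 1).choose j : ℚ) *
          harmonic (i - 1)
      = ∑ t ∈ range (m+1),
          ((m - t + d).choose (m - t) : ℚ) * ((j+t).choose j : ℚ) * harmonic (j+t) := by
    rw [hIcc, Finset.sum_Ico_eq_sum_range]
    rw [show j+m+2 - (j+1) = m+1 by omega]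
    apply Finset.sum_congr rfl
    intro t ht
    have htm : t ≤ m := Nat.lt_succ_iff.mp (Finset.mem_range.mp ht)
    rw [show j+m+1+d - (j+1+t) = m - t + d by omega,
        show j+m+1 - (j+1+t) = m - t by omega,
        show j+1+t-1 = j+t by omega]
  rw [show j + m + 1 = (j+m) + 1 by rfl] at hL
  rw [show j + m - j = m by omega, show j+m+1+d - m = j+1+d by omega]
  rw [hL, Sform j d m]
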